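/- Let m ≥ 3 be an odd integer and G = K_m the complete graph on m vertices. Then the codegree of the matching polytope M_{K_m} equals Δ(K_m) + 2 = m + 1. -/

import Mathlib

open Finset

noncomputable section

/-- The dilation `kP` of a set `P ⊆ ℝ^ι`. -/
def dilate {ι : Type*} (k : ℕ) (P : Set (ι → ℝ)) : Set (ι → ℝ) :=
  (fun x => (k : ℝ) • x) '' P

/-- A point of `ℝ^ι` is a lattice point if all its coordinates are integers. -/
def IsLatticePt {ι : Type*} (x : ι → ℝ) : Prop := ∀ i, ∃ m : ℤ, x i = m

/-- The codegree of a (full-dimensional lattice) polytope `P ⊆ ℝ^ι`: the smallest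
positive integer `k` such that the interior of `kP` contains a lattice point. -/
def codeg {ι : Type*} (P : Set (ι → ℝ)) : ℕ :=
  sInf {k | 0 < k ∧ ∃ x, IsLatticePt x ∧ x ∈ interior (dilate k P)}

/-- The stable set polytope of a simple graph: the convex hull of the indicator
vectors of the stable (independent) sets of `G`. -/
def stablePolytope {V : Type*} (G : SimpleGraph V) : Set (V → ℝ) :=
  convexHull ℝ {x | ∃ S : Set V, (∀ u ∈ S, ∀ v ∈ S, ¬ G.Adj u v) ∧
    x = S.indicator (fun _ => (1 : ℝ))}

/-- The matching polytope of `G`. -/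
def matchingPolytope {V : Type*} (G : SimpleGraph V) : Set (G.edgeSet → ℝ) :=
  convexHull ℝ {x | ∃ M : Set (Sym2 V), M ⊆ G.edgeSet ∧
    (∀ e ∈ M, ∀ f ∈ M, e ≠ f → ∀ v : V, ¬(v ∈ e ∧ v ∈ f)) ∧
    x = Set.indicator {e : G.edgeSet | (e : Sym2 V) ∈ M} (fun _ => (1 : ℝ))}

/-! ### Auxiliary material -/

open scoped Classical

/-- Sum of the two endpoints of an edge, in `Fin m`. -/
def esum (m : ℕ) [NeZero m] : Sym2 (Fin m) → Fin m :=
  Sym2.lift ⟨fun a b => a + b, fun a b => add_comm a b⟩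

@[simp] lemma esum_mk (m : ℕ) [NeZero m] (a b : Fin m) : esum m s(a, b) = a + b := rfl

/-- The generating set of the matching polytope of `K_m`. -/
def mGens (m : ℕ) : Set (↥((⊤ : SimpleGraph (Fin m)).edgeSet) → ℝ) :=
  {x | ∃ M : Set (Sym2 (Fin m)), M ⊆ (⊤ : SimpleGraph (Fin m)).edgeSet ∧
    (∀ e ∈ M, ∀ f ∈ M, e ≠ f → ∀ v : Fin m, ¬(v ∈ e ∧ v ∈ f)) ∧
    x = Set.indicator {e : ↥((⊤ : SimpleGraph (Fin m)).edgeSet) | (e : Sym2 (Fin m)) ∈ M}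
      (fun _ => (1 : ℝ))}

lemma matchingPolytope_top_eq (m : ℕ) :
    matchingPolytope (⊤ : SimpleGraph (Fin m)) = convexHull ℝ (mGens m) := rfl

/-- The near-perfect matching `M_i` of `K_m`: the edges whose endpoints sum to `i`. -/
def Mi (m : ℕ) [NeZero m] (i : Fin m) : Set (Sym2 (Fin m)) :=
  {s | s ∈ (⊤ : SimpleGraph (Fin m)).edgeSet ∧ esum m s = i}

lemma zero_mem_mGens (m : ℕ) : (0 : ↥((⊤ : SimpleGraph (Fin m)).edgeSet) → ℝ) ∈ mGens m := by
  refine ⟨∅, by simp, by simp, ?_⟩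
  funext e
  simp [Set.indicator_apply]

lemma single_mem_mGens (m : ℕ) (f : ↥((⊤ : SimpleGraph (Fin m)).edgeSet)) :
    Set.indicator {e : ↥((⊤ : SimpleGraph (Fin m)).edgeSet) |
        (e : Sym2 (Fin m)) ∈ ({(f : Sym2 (Fin m))} : Set (Sym2 (Fin m)))}
      (fun _ => (1 : ℝ)) ∈ mGens m := by
  refine ⟨{(f : Sym2 (Fin m))}, ?_, ?_, rfl⟩
  · rw [Set.singleton_subset_iff]; exact f.2
  · intro e he f' hf' hne v
    rw [Set.mem_singleton_iff] at he hf'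
    exact absurd (he.trans hf'.symm) hne

lemma Mi_mem_mGens (m : ℕ) [NeZero m] (i : Fin m) :
    Set.indicator {e : ↥((⊤ : SimpleGraph (Fin m)).edgeSet) | (e : Sym2 (Fin m)) ∈ Mi m i}
      (fun _ => (1 : ℝ)) ∈ mGens m := by
  refine ⟨Mi m i, fun s hs => hs.1, ?_, rfl⟩
  intro e he f hf hne v hv
  obtain ⟨hv1, hv2⟩ := hv
  obtain ⟨a, rfl⟩ := Sym2.mem_iff_exists.mp hv1
  obtain ⟨b, rfl⟩ := Sym2.mem_iff_exists.mp hv2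
  have ha : v + a = i := he.2
  have hb : v + b = i := hf.2
  have : a = b := by
    have := ha.trans hb.symm
    exact add_left_cancel this
  subst this
  exact hne rfl

/-- Every generator of the matching polytope of `K_m` (m odd) has nonnegative
coordinates summing to at most `(m-1)/2`. -/
lemma mGens_subset (m : ℕ) (hm : 3 ≤ m) (hodd : Odd m) :
    mGens m ⊆ {w : ↥((⊤ : SimpleGraph (Fin m)).edgeSet) → ℝ |
      (∀ e, 0 ≤ w e) ∧ ∑ e, w e ≤ ((m : ℝ) - 1) / 2} := by
  rintro x ⟨M, hME, hmatch, rfl⟩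
  constructor
  · exact Set.indicator_nonneg (fun _ _ => zero_le_one)
  · set T : Finset ↥((⊤ : SimpleGraph (Fin m)).edgeSet) :=
      Finset.univ.filter (fun e : ↥((⊤ : SimpleGraph (Fin m)).edgeSet) =>
        (e : Sym2 (Fin m)) ∈ M) with hT
    have hsum : ∑ e : ↥((⊤ : SimpleGraph (Fin m)).edgeSet),
        Set.indicator {e : ↥((⊤ : SimpleGraph (Fin m)).edgeSet) | (e : Sym2 (Fin m)) ∈ M}
          (fun _ => (1 : ℝ)) e = (T.card : ℝ) := by
      rw [hT, ← Finset.sum_boole]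
      refine Finset.sum_congr rfl (fun e _ => ?_)
      simp [Set.indicator_apply]
    rw [hsum]
    -- counting: 2 * T.card ≤ m
    set vset : Sym2 (Fin m) → Finset (Fin m) := fun s => Finset.univ.filter (· ∈ s) with hvset
    have hvcard : ∀ e : ↥((⊤ : SimpleGraph (Fin m)).edgeSet),
        (vset (e : Sym2 (Fin m))).card = 2 := by
      intro e
      have hnd : ¬ ((e : Sym2 (Fin m)).IsDiag) :=
        SimpleGraph.not_isDiag_of_mem_edgeSet _ e.2
      revert hnd
      refine Sym2.inductionOn (e : Sym2 (Fin m)) ?_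
      intro a b hnd
      rw [Sym2.mk_isDiag_iff] at hnd
      have : Finset.univ.filter (· ∈ s(a, b)) = {a, b} := by
        ext v; simp [Sym2.mem_iff]
      rw [hvset]
      simp only [this]
      exact Finset.card_pair hnd
    have hdisj : ∀ e ∈ T, ∀ f ∈ T, e ≠ f →
        Disjoint (vset (e : Sym2 (Fin m))) (vset (f : Sym2 (Fin m))) := by
      intro e he f hf hne
      rw [Finset.mem_filter] at he hf
      rw [Finset.disjoint_left]
      intro v hv1 hv2
      rw [hvset] at hv1 hv2
      simp only [Finset.mem_filter, Finset.mem_univ, true_and] at hv1 hv2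
      have hcne : (e : Sym2 (Fin m)) ≠ (f : Sym2 (Fin m)) := by
        simpa [Subtype.coe_inj] using hne
      exact hmatch _ he.2 _ hf.2 hcne v ⟨hv1, hv2⟩
    have hbiU : (T.biUnion (fun e => vset (e : Sym2 (Fin m)))).card
        = ∑ e ∈ T, (vset (e : Sym2 (Fin m))).card := Finset.card_biUnion hdisj
    have h2T : 2 * T.card ≤ m := by
      have h1 : ∑ e ∈ T, (vset (e : Sym2 (Fin m))).card = 2 * T.card := by
        rw [Finset.sum_congr rfl (fun e _ => hvcard e), Finset.sum_const, smul_eq_mul,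
          mul_comm]
      calc 2 * T.card = (T.biUnion (fun e => vset (e : Sym2 (Fin m)))).card := by
            rw [hbiU, h1]
        _ ≤ Fintype.card (Fin m) := Finset.card_le_univ _
        _ = m := Fintype.card_fin m
    have h2T' : 2 * T.card ≤ m - 1 := by
      obtain ⟨t, rfl⟩ := hodd
      omega
    have hcast : 2 * (T.card : ℝ) ≤ (m : ℝ) - 1 := by
      have : ((2 * T.card : ℕ) : ℝ) ≤ ((m - 1 : ℕ) : ℝ) := by exact_mod_cast h2T'
      rw [Nat.cast_mul, Nat.cast_sub (by omega)] at this
      simpa using this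
    linarith

/-- The matching polytope of `K_m` (m odd) is inside the basic halfspaces. -/
lemma matchingPolytope_subset (m : ℕ) (hm : 3 ≤ m) (hodd : Odd m) :
    matchingPolytope (⊤ : SimpleGraph (Fin m)) ⊆
      {w : ↥((⊤ : SimpleGraph (Fin m)).edgeSet) → ℝ |
        (∀ e, 0 ≤ w e) ∧ ∑ e, w e ≤ ((m : ℝ) - 1) / 2} := by
  rw [matchingPolytope_top_eq]
  refine convexHull_min (mGens_subset m hm hodd) ?_
  intro u hu v hv a b ha hb hab
  constructor
  · intro e
    have h1 := hu.1 e
    have h2 := hv.1 e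
    simp only [Pi.add_apply, Pi.smul_apply, smul_eq_mul]
    nlinarith
  · simp only [Pi.add_apply, Pi.smul_apply, smul_eq_mul]
    rw [Finset.sum_add_distrib, ← Finset.mul_sum, ← Finset.mul_sum]
    calc a * ∑ i, u i + b * ∑ i, v i
        ≤ a * (((m : ℝ) - 1) / 2) + b * (((m : ℝ) - 1) / 2) :=
          add_le_add (mul_le_mul_of_nonneg_left hu.2 ha) (mul_le_mul_of_nonneg_left hv.2 hb)
      _ = (a + b) * (((m : ℝ) - 1) / 2) := by ring
      _ = ((m : ℝ) - 1) / 2 := by rw [hab, one_mul]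

lemma card_edges (m : ℕ) (hodd : Odd m) :
    2 * Fintype.card ↥((⊤ : SimpleGraph (Fin m)).edgeSet) = m * (m - 1) := by
  have h1 : Fintype.card ↥((⊤ : SimpleGraph (Fin m)).edgeSet) = m.choose 2 := by
    have h2 := SimpleGraph.card_edgeFinset_top_eq_card_choose_two (V := Fin m)
    rw [SimpleGraph.edgeFinset_card, Fintype.card_fin] at h2
    convert h2 using 2

  have hdvd : 2 ∣ m * (m - 1) := by
    obtain ⟨t, rfl⟩ := hodd
    refine ⟨(2 * t + 1) * t, ?_⟩
    have h3 : 2 * t + 1 - 1 = 2 * t := by omega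
    rw [h3]; ring
  rw [h1, Nat.choose_two_right]
  exact Nat.mul_div_cancel' hdvd

/-- The lower bound: any `k` admitting a lattice point in `int(k·M)` satisfies `m+1 ≤ k`. -/
lemma lower_bound (m : ℕ) (hm : 3 ≤ m) (hodd : Odd m) (k : ℕ)
    (hk : k ∈ {k : ℕ | 0 < k ∧ ∃ x, IsLatticePt x ∧
      x ∈ interior (dilate k (matchingPolytope (⊤ : SimpleGraph (Fin m))))}) :
    m + 1 ≤ k := by
  obtain ⟨hkpos, x, hxl, hxi⟩ := hk
  haveI : NeZero m := ⟨by omega⟩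
  set N : ℕ := Fintype.card ↥((⊤ : SimpleGraph (Fin m)).edgeSet) with hN
  have hdil : ∀ z ∈ dilate k (matchingPolytope (⊤ : SimpleGraph (Fin m))),
      (∀ e, 0 ≤ z e) ∧ ∑ e, z e ≤ (k : ℝ) * (((m : ℝ) - 1) / 2) := by
    rintro z ⟨w, hw, rfl⟩
    have hwC := matchingPolytope_subset m hm hodd hw
    constructor
    · intro e
      simp only [Pi.smul_apply, smul_eq_mul]
      exact mul_nonneg (by positivity) (hwC.1 e)
    · simp only [Pi.smul_apply, smul_eq_mul]
      rw [← Finset.mul_sum]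
      exact mul_le_mul_of_nonneg_left hwC.2 (by positivity)
  rw [mem_interior_iff_mem_nhds, Metric.mem_nhds_iff] at hxi
  obtain ⟨r, hr, hball⟩ := hxi
  -- all coordinates are at least 1
  have hx1 : ∀ e, (1 : ℝ) ≤ x e := by
    intro e
    set x' : ↥((⊤ : SimpleGraph (Fin m)).edgeSet) → ℝ :=
      fun f => x f - if f = e then r / 2 else 0 with hx'
    have hx'mem : x' ∈ dilate k (matchingPolytope (⊤ : SimpleGraph (Fin m))) := by
      apply hball
      rw [Metric.mem_ball]
      have hle : dist x' x ≤ r / 2 := by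
        rw [dist_pi_le_iff (by positivity)]
        intro f
        rw [Real.dist_eq]
        have : x' f - x f = -(if f = e then r / 2 else 0) := by rw [hx']; ring
        rw [this, abs_neg]
        split
        · exact (abs_of_nonneg (by linarith)).le
        · rw [abs_zero]; positivity
      linarith
    have h0 : 0 ≤ x' e := (hdil x' hx'mem).1 e
    have hre : r / 2 ≤ x e := by
      have : x' e = x e - r / 2 := by rw [hx']; simp
      linarith [this ▸ h0]
    obtain ⟨n, hn⟩ := hxl e
    rw [hn] at hre ⊢
    have hn0 : (0 : ℝ) < (n : ℝ) := lt_of_lt_of_le (by positivity) hre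
    have : (0 : ℤ) < n := by exact_mod_cast hn0
    exact_mod_cast this
  -- strict total bound
  have hstrict : (N : ℝ) + N * (r / 2) ≤ (k : ℝ) * (((m : ℝ) - 1) / 2) := by
    set x' : ↥((⊤ : SimpleGraph (Fin m)).edgeSet) → ℝ := fun f => x f + r / 2 with hx'
    have hx'mem : x' ∈ dilate k (matchingPolytope (⊤ : SimpleGraph (Fin m))) := by
      apply hball
      rw [Metric.mem_ball]
      have hle : dist x' x ≤ r / 2 := by
        rw [dist_pi_le_iff (by positivity)]
        intro f
        rw [Real.dist_eq]
        have : x' f - x f = r / 2 := by rw [hx']; ring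
        rw [this]
        exact (abs_of_nonneg (by linarith)).le
      linarith
    have hsum := (hdil x' hx'mem).2
    have h1 : ∑ e, x' e = (∑ e, x e) + N * (r / 2) := by
      rw [hx']
      rw [Finset.sum_add_distrib, Finset.sum_const, Finset.card_univ, nsmul_eq_mul]
    have h2 : (N : ℝ) ≤ ∑ e, x e := by
      calc (N : ℝ) = ∑ _e : ↥((⊤ : SimpleGraph (Fin m)).edgeSet), (1 : ℝ) := by
            rw [Finset.sum_const, Finset.card_univ, nsmul_eq_mul, mul_one]
        _ ≤ ∑ e, x e := Finset.sum_le_sum (fun e _ => hx1 e)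
    rw [h1] at hsum
    linarith
  have hNpos : 0 < N := by
    have h6 : 6 ≤ m * (m - 1) := by
      calc 6 = 3 * 2 := rfl
        _ ≤ m * (m - 1) := Nat.mul_le_mul hm (by omega)
    rw [← card_edges m hodd, ← hN] at h6
    omega
  have h2N : 2 * (N : ℝ) = (m : ℝ) * ((m : ℝ) - 1) := by
    have := card_edges m hodd
    rw [← hN] at this
    have hc : ((2 * N : ℕ) : ℝ) = ((m * (m - 1) : ℕ) : ℝ) := by exact_mod_cast this
    rw [Nat.cast_mul, Nat.cast_mul, Nat.cast_sub (by omega)] at hc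
    simpa using hc
  have hmk : (m : ℝ) < (k : ℝ) := by
    have hN' : (0 : ℝ) < N := by exact_mod_cast hNpos
    have hm1 : (0 : ℝ) < (m : ℝ) - 1 := by
      have : (3 : ℝ) ≤ m := by exact_mod_cast hm
      linarith
    nlinarith
  have hfin : m < k := by exact_mod_cast hmk
  omega

/-- The upper bound: the all-ones vector is a lattice point interior to `(m+1)·M`. -/
lemma upper_bound (m : ℕ) (hm : 3 ≤ m) :
    ∃ x : ↥((⊤ : SimpleGraph (Fin m)).edgeSet) → ℝ, IsLatticePt x ∧
      x ∈ interior (dilate (m + 1) (matchingPolytope (⊤ : SimpleGraph (Fin m)))) := by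
  haveI : NeZero m := ⟨by omega⟩
  set N : ℕ := Fintype.card ↥((⊤ : SimpleGraph (Fin m)).edgeSet) with hN
  have hNpos : 0 < N := by
    have hne : Nonempty ↥((⊤ : SimpleGraph (Fin m)).edgeSet) := by
      refine ⟨⟨s((⟨0, by omega⟩ : Fin m), (⟨1, by omega⟩ : Fin m)), ?_⟩⟩
      rw [SimpleGraph.mem_edgeSet]
      simp [Fin.ext_iff]
    rw [hN]
    exact Fintype.card_pos
  have hm1 : (0 : ℝ) < (m : ℝ) + 1 := by positivity
  set ε : ℝ := 1 / (((m : ℝ) + 1) * (2 * N + 1)) with hε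
  have hεpos : 0 < ε := by rw [hε]; positivity
  have hkey : 1 / ((m : ℝ) + 1) = ε * (2 * N + 1) := by
    rw [hε]; field_simp
  have hN1 : (1 : ℝ) ≤ (N : ℝ) := by exact_mod_cast hNpos
  have hεlt : ε < 1 / ((m : ℝ) + 1) := by
    rw [hkey]; nlinarith
  set γ : ℝ := 1 / ((m : ℝ) + 1) - ε with hγ
  have hγpos : 0 < γ := by rw [hγ]; linarith
  set U : Set (↥((⊤ : SimpleGraph (Fin m)).edgeSet) → ℝ) :=
    Set.pi Set.univ (fun _ => Set.Ioo (1 / ((m : ℝ) + 1) - ε) (1 / ((m : ℝ) + 1) + ε)) with hU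
  have hUopen : IsOpen U := isOpen_set_pi Set.finite_univ (fun _ _ => isOpen_Ioo)
  have hUsub : U ⊆ matchingPolytope (⊤ : SimpleGraph (Fin m)) := by
    intro z hz
    rw [hU, Set.mem_pi] at hz
    have hzlo : ∀ e, 1 / ((m : ℝ) + 1) - ε < z e := fun e => (hz e (Set.mem_univ e)).1
    have hzhi : ∀ e, z e < 1 / ((m : ℝ) + 1) + ε := fun e => (hz e (Set.mem_univ e)).2
    rw [matchingPolytope_top_eq]
    set w : Option (↥((⊤ : SimpleGraph (Fin m)).edgeSet) ⊕ Fin m) → ℝ := fun j =>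
      Option.elim j (1 - (∑ f, (z f - γ)) - m * γ)
        (Sum.elim (fun f => z f - γ) (fun _ => γ)) with hw
    set p : Option (↥((⊤ : SimpleGraph (Fin m)).edgeSet) ⊕ Fin m) →
        (↥((⊤ : SimpleGraph (Fin m)).edgeSet) → ℝ) := fun j =>
      Option.elim j 0 (Sum.elim
        (fun f => Set.indicator {e : ↥((⊤ : SimpleGraph (Fin m)).edgeSet) |
            (e : Sym2 (Fin m)) ∈ ({(f : Sym2 (Fin m))} : Set (Sym2 (Fin m)))} (fun _ => (1 : ℝ)))
        (fun i => Set.indicator {e : ↥((⊤ : SimpleGraph (Fin m)).edgeSet) |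
            (e : Sym2 (Fin m)) ∈ Mi m i} (fun _ => (1 : ℝ)))) with hp
    have hsumz : ∑ f, (z f - γ) ≤ 2 * N * ε := by
      calc ∑ f, (z f - γ) ≤ ∑ _f : ↥((⊤ : SimpleGraph (Fin m)).edgeSet), 2 * ε :=
            Finset.sum_le_sum (fun f _ => by have := hzhi f; rw [hγ]; linarith)
        _ = (N : ℝ) * (2 * ε) := by
            rw [Finset.sum_const, Finset.card_univ, nsmul_eq_mul, hN]
        _ = 2 * N * ε := by ring
    have hw0 : ∀ j, 0 ≤ w j := by
      rintro (_ | f | i)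
      · show 0 ≤ 1 - (∑ f, (z f - γ)) - m * γ
        have h0m : (0 : ℝ) ≤ m := by positivity
        have hγle : (m : ℝ) * γ ≤ (m : ℝ) / ((m : ℝ) + 1) := by
          rw [hγ]
          have := mul_nonneg h0m hεpos.le
          rw [mul_sub, mul_one_div]
          linarith
        have h1 : 1 - (m : ℝ) / ((m : ℝ) + 1) = 1 / ((m : ℝ) + 1) := by field_simp; ring
        have e1 : 1 - (m : ℝ) / ((m : ℝ) + 1) = ε * (2 * N + 1) := by rw [h1, hkey]
        have t3 : ε * (2 * (N : ℝ) + 1) = 2 * N * ε + ε := by ring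
        clear_value γ ε
        linarith [hsumz, hγle, e1, t3, hεpos.le]
      · show 0 ≤ z f - γ
        have := hzlo f; rw [hγ]; linarith
      · show 0 ≤ γ
        exact hγpos.le
    have hpmem : ∀ j, p j ∈ mGens m := by
      rintro (_ | f | i)
      · exact zero_mem_mGens m
      · exact single_mem_mGens m f
      · exact Mi_mem_mGens m i
    have hwsum : ∑ j, w j = 1 := by
      rw [Fintype.sum_option, Fintype.sum_sum_type]
      simp only [hw, Option.elim_none, Option.elim_some, Sum.elim_inl, Sum.elim_inr]
      rw [Finset.sum_const, Finset.card_univ, Fintype.card_fin, nsmul_eq_mul]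
      ring
    have hcomb : ∑ j, w j • p j = z := by
      funext e
      rw [Finset.sum_apply]
      rw [Fintype.sum_option, Fintype.sum_sum_type]
      simp only [hw, hp, Option.elim_none, Option.elim_some, Sum.elim_inl, Sum.elim_inr,
        Pi.smul_apply, smul_eq_mul, Pi.zero_apply, mul_zero]
      have hind1 : ∀ f : ↥((⊤ : SimpleGraph (Fin m)).edgeSet),
          Set.indicator {e' : ↥((⊤ : SimpleGraph (Fin m)).edgeSet) |
            (e' : Sym2 (Fin m)) ∈ ({(f : Sym2 (Fin m))} : Set (Sym2 (Fin m)))}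
            (fun _ => (1 : ℝ)) e = if e = f then 1 else 0 := by
        intro f
        simp only [Set.indicator_apply, Set.mem_setOf_eq, Set.mem_singleton_iff,
          Subtype.coe_inj]
      have hind2 : ∀ i : Fin m,
          Set.indicator {e' : ↥((⊤ : SimpleGraph (Fin m)).edgeSet) |
            (e' : Sym2 (Fin m)) ∈ Mi m i} (fun _ => (1 : ℝ)) e
          = if esum m (e : Sym2 (Fin m)) = i then 1 else 0 := by
        intro i
        simp only [Set.indicator_apply, Set.mem_setOf_eq, Mi, e.2, true_and]
      simp only [hind1, hind2, mul_ite, mul_one, mul_zero]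
      rw [Finset.sum_ite_eq, Finset.sum_ite_eq]
      simp
    rw [← hcomb]
    exact Convex.sum_mem (convex_convexHull ℝ (mGens m)) (fun j _ => hw0 j) hwsum
      (fun j _ => subset_convexHull ℝ (mGens m) (hpmem j))
  have hy : (fun _ => 1 / ((m : ℝ) + 1)) ∈ U := by
    rw [hU, Set.mem_pi]
    intro e _
    exact ⟨by linarith, by linarith⟩
  have hyint : (fun _ => 1 / ((m : ℝ) + 1)) ∈
      interior (matchingPolytope (⊤ : SimpleGraph (Fin m))) :=
    interior_maximal hUsub hUopen hy
  refine ⟨fun _ => 1, fun e => ⟨1, by norm_num⟩, ?_⟩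
  have hk0 : ((m + 1 : ℕ) : ℝ) ≠ 0 := by positivity
  set h : (↥((⊤ : SimpleGraph (Fin m)).edgeSet) → ℝ) ≃ₜ
      (↥((⊤ : SimpleGraph (Fin m)).edgeSet) → ℝ) :=
    Homeomorph.smulOfNeZero (((m + 1 : ℕ) : ℝ)) hk0 with hh
  have hfun : ∀ v : ↥((⊤ : SimpleGraph (Fin m)).edgeSet) → ℝ,
      h v = ((m + 1 : ℕ) : ℝ) • v := fun v => rfl
  have hxmem : (fun _ => (1 : ℝ)) ∈ ⇑h '' interior (matchingPolytope (⊤ : SimpleGraph (Fin m))) := by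
    refine ⟨(fun _ => 1 / ((m : ℝ) + 1)), hyint, ?_⟩
    rw [hfun]
    funext e
    simp only [Pi.smul_apply, smul_eq_mul]
    push_cast
    field_simp
  rw [h.image_interior] at hxmem
  have himg : ⇑h '' (matchingPolytope (⊤ : SimpleGraph (Fin m)))
      = dilate (m + 1) (matchingPolytope (⊤ : SimpleGraph (Fin m))) :=
    Set.image_congr' hfun
  rw [himg] at hxmem
  exact hxmem

open scoped Classical in
/-- For odd `m ≥ 3`, the codegree of the matching polytope of `K_m` equals
`Δ(K_m) + 2 = m + 1`. -/
theorem stmt9 (m : ℕ) (hm : 3 ≤ m) (hodd : Odd m) :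
    codeg (matchingPolytope (⊤ : SimpleGraph (Fin m))) =
        (⊤ : SimpleGraph (Fin m)).maxDegree + 2 ∧
      (⊤ : SimpleGraph (Fin m)).maxDegree + 2 = m + 1 := by
  have hdeg : (⊤ : SimpleGraph (Fin m)).maxDegree = m - 1 := by
    apply le_antisymm
    · apply SimpleGraph.maxDegree_le_of_forall_degree_le
      intro v
      have hlt := SimpleGraph.degree_lt_card_verts (G := (⊤ : SimpleGraph (Fin m))) v
      rw [Fintype.card_fin] at hlt
      omega
    · have hv := SimpleGraph.degree_le_maxDegree (⊤ : SimpleGraph (Fin m)) (⟨0, by omega⟩ : Fin m)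
      rw [SimpleGraph.complete_graph_degree, Fintype.card_fin] at hv
      exact hv
  obtain ⟨x, hxl, hxi⟩ := upper_bound m hm
  have hmem : m + 1 ∈ {k : ℕ | 0 < k ∧ ∃ x, IsLatticePt x ∧
      x ∈ interior (dilate k (matchingPolytope (⊤ : SimpleGraph (Fin m))))} :=
    ⟨by omega, x, hxl, hxi⟩
  have h1 : codeg (matchingPolytope (⊤ : SimpleGraph (Fin m))) = m + 1 :=
    le_antisymm (Nat.sInf_le hmem)
      (le_csInf ⟨m + 1, hmem⟩ (fun k hk => lower_bound m hm hodd k hk))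
  constructor
  · rw [h1, hdeg]; omega
  · rw [hdeg]; omega
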